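/- Let q ≥ 3 be a prime power, k ≥ 2, m = 2k, and suppose U_1,…,U_r are k-dimensional F_q-subspaces of F_{q^m} forming a multi-orbit cyclic subspace code ∪_i C_{U_i} with r distinct orbits and minimum distance 2k − 2. Then the resulting optical orthogonal code has parameters (q^{2k} − 1, q^k, q) and size r(q^k − 1)/(q − 1). -/
import Mathlib


/-- An `(n,w,λ)` optical orthogonal set. -/
def IsOOS (n w lam : ℕ) [NeZero n] (S : Set (Set (ZMod n))) : Prop :=
  (∀ X ∈ S, Nat.card X = w) ∧
  (∀ X ∈ S, ∀ τ : ℕ, 0 < τ → τ < n →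
    Nat.card ↥(X ∩ ((fun a => a + (τ : ZMod n)) '' X)) ≤ lam) ∧
  (∀ X ∈ S, ∀ Y ∈ S, X ≠ Y → ∀ τ : ℕ,
    Nat.card ↥(X ∩ ((fun a => a + (τ : ZMod n)) '' Y)) ≤ lam)

section Helpers

variable {Fq L : Type*} [Field Fq] [Field L] [Algebra Fq L] [Fintype Fq] [Fintype L]

lemma coset_inter_card_le (U W : Submodule Fq L) (d e : L) :
    Nat.card ↥(((fun u => u + d) '' (U : Set L)) ∩ ((fun u => u + e) '' (W : Set L))) ≤
      Nat.card ↥(U ⊓ W) := by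
  rcases Set.eq_empty_or_nonempty
    (((fun u => u + d) '' (U : Set L)) ∩ ((fun u => u + e) '' (W : Set L))) with hE | ⟨x₀, hx₀⟩
  · rw [hE]; simp
  · set S : Set L := ((fun u => u + d) '' (U : Set L)) ∩ ((fun u => u + e) '' (W : Set L)) with hS
    have key : ∀ x ∈ S, x - x₀ ∈ U ⊓ W := by
      rintro x ⟨⟨u, hu, rfl⟩, ⟨w, hw, hwx⟩⟩
      obtain ⟨⟨u₀, hu₀, h₀⟩, ⟨w₀, hw₀, h₀'⟩⟩ := hx₀
      refine Submodule.mem_inf.mpr ⟨?_, ?_⟩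
      · rw [← h₀]
        have : (u + d) - (u₀ + d) = u - u₀ := by ring
        rw [this]; exact sub_mem hu hu₀
      · rw [← h₀', ← hwx]
        have : (w + e) - (w₀ + e) = w - w₀ := by ring
        rw [this]; exact sub_mem hw hw₀
    have hinj : Function.Injective
        (fun x : ↥S => (⟨x.1 - x₀, key x.1 x.2⟩ : ↥(U ⊓ W))) := by
      intro a b hab
      simp only [Subtype.mk_eq_mk, sub_left_inj] at hab
      exact Subtype.ext hab
    exact Nat.card_le_card_of_injective _ hinj

lemma submodule_card_le (q : ℕ) (hq : 1 ≤ q) (hFq : Fintype.card Fq = q)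
    (W : Submodule Fq L) (h1 : Module.finrank Fq W ≤ 1) : Nat.card ↥W ≤ q := by
  classical
  haveI : Fintype ↥W := Fintype.ofFinite _
  rw [Nat.card_eq_fintype_card, Module.card_eq_pow_finrank (K := Fq) (V := ↥W), hFq]
  calc q ^ Module.finrank Fq ↥W ≤ q ^ 1 := Nat.pow_le_pow_right hq h1
    _ = q := pow_one q

lemma submodule_card_eq (q k : ℕ) (hFq : Fintype.card Fq = q)
    (W : Submodule Fq L) (h1 : Module.finrank Fq W = k) : Nat.card ↥(W : Set L) = q ^ k := by
  classical
  haveI : Fintype ↥W := Fintype.ofFinite _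
  rw [SetLike.coe_sort_coe, Nat.card_eq_fintype_card,
    Module.card_eq_pow_finrank (K := Fq) (V := ↥W), hFq, h1]

end Helpers


/-- For `q ≥ 3`, `m = 2k` and a multi-orbit cyclic subspace code `∪ᵢ C_{Uᵢ}` with `r`
distinct orbits and minimum distance `2k−2` (multi-Sidon condition), the resulting
optical orthogonal code has parameters `(q^{2k} − 1, q^k, q)` and size
`r(q^k − 1)/(q − 1)`. -/
theorem stmt_18 {Fq L : Type*} [Field Fq] [Field L] [Algebra Fq L]
    [Fintype Fq] [Fintype L] (q k r t : ℕ) (hq : IsPrimePow q) (hq3 : 3 ≤ q)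
    (hk : 2 ≤ k) (hFq : Fintype.card Fq = q) (hL : Fintype.card L = q ^ (2 * k))
    [NeZero (q ^ (2 * k) - 1)]
    (ht : t = (q ^ k - 1) / (q - 1))
    (ω : Lˣ) (hω : ∀ u : Lˣ, u ∈ Subgroup.zpowers ω)
    (U : Fin r → Submodule Fq L) (hUk : ∀ i, Module.finrank Fq (U i) = k)
    -- the r orbits are pairwise distinct
    (horb : ∀ i j : Fin r, i ≠ j → ∀ α : L, α ≠ 0 →
      (U i).map (LinearMap.mulLeft Fq α) ≠ U j)
    -- minimum distance 2k−2 (multi-Sidon space condition)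
    (hauto : ∀ i, ∀ α : L, α ∉ Set.range (algebraMap Fq L) →
      Module.finrank Fq ↥(U i ⊓ (U i).map (LinearMap.mulLeft Fq α)) ≤ 1)
    (hcross : ∀ i j : Fin r, i ≠ j → ∀ α : L, α ≠ 0 →
      Module.finrank Fq ↥(U i ⊓ (U j).map (LinearMap.mulLeft Fq α)) ≤ 1)
    -- pairwise non-F_q-proportional nonzero coset representatives
    (D : Fin r → Fin t → L) (hD0 : ∀ i j, D i j ∉ U i)
    (hDprop : ∀ i, ∀ j h : Fin t, j ≠ h →
      ¬ ∃ lam : Fq, lam ≠ 0 ∧ D i j - algebraMap Fq L lam * D i h ∈ U i)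
    (A : Set (Set L))
    (hA : A = {V : Set L | ∃ i j, V = (fun u => u + D i j) '' ((U i : Set L))}) :
    IsOOS (q ^ (2 * k) - 1) (q ^ k) q
        ((fun V : Set L =>
          ({i : ZMod (q ^ (2 * k) - 1) | (ω : L) ^ i.val ∈ V} :
            Set (ZMod (q ^ (2 * k) - 1)))) '' A) ∧
    Nat.card ((fun V : Set L =>
          ({i : ZMod (q ^ (2 * k) - 1) | (ω : L) ^ i.val ∈ V} :
            Set (ZMod (q ^ (2 * k) - 1)))) '' A)
      = r * ((q ^ k - 1) / (q - 1)) := by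
  classical
  subst hA
  have hq1 : 1 ≤ q := le_trans (by norm_num) hq3
  have hcardL : Nat.card Lˣ = q ^ (2 * k) - 1 := by
    rw [Nat.card_units, Nat.card_eq_fintype_card, hL]
  have hord : orderOf ω = q ^ (2 * k) - 1 := by
    rw [orderOf_eq_card_of_forall_mem_zpowers hω]; exact hcardL
  -- powers of ω indexed by ZMod n
  have hemul : ∀ (i : ZMod (q ^ (2 * k) - 1)) (τ : ℕ),
      ω ^ ((i + (τ : ZMod (q ^ (2 * k) - 1))).val) = ω ^ τ * ω ^ i.val := by
    intro i τ
    have h1 : ω ^ ((i + (τ : ZMod (q ^ (2 * k) - 1))).val) = ω ^ (i.val + τ) := by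
      rw [pow_eq_pow_iff_modEq, hord, ZMod.val_add, ZMod.val_natCast]
      exact (Nat.mod_modEq _ _).trans ((Nat.ModEq.refl _).add (Nat.mod_modEq τ _))
    rw [h1, pow_add, mul_comm]
  have hemulL : ∀ (i : ZMod (q ^ (2 * k) - 1)) (τ : ℕ),
      (ω : L) ^ ((i + (τ : ZMod (q ^ (2 * k) - 1))).val) = (ω : L) ^ τ * (ω : L) ^ i.val := by
    intro i τ
    have := congrArg (Units.val) (hemul i τ)
    simpa using this
  have heinjL : ∀ i j : ZMod (q ^ (2 * k) - 1),
      (ω : L) ^ i.val = (ω : L) ^ j.val → i = j := by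
    intro i j hij
    have h' : ω ^ i.val = ω ^ j.val := by
      apply Units.ext; simpa using hij
    have hv : i.val = j.val := by
      refine pow_injOn_Iio_orderOf ?_ ?_ h' <;>
        simp [Set.mem_Iio, hord, ZMod.val_lt]
    exact ZMod.val_injective _ hv
  have hesurjL : ∀ x : L, x ≠ 0 → ∃ i : ZMod (q ^ (2 * k) - 1), (ω : L) ^ i.val = x := by
    have hbij : Function.Bijective (fun i : ZMod (q ^ (2 * k) - 1) => ω ^ i.val) := by
      rw [Fintype.bijective_iff_injective_and_card]
      constructor
      · intro i j hij
        exact heinjL i j (by simpa using congrArg Units.val hij)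
      · rw [ZMod.card, ← Nat.card_eq_fintype_card, hcardL]
    intro x hx
    obtain ⟨i, hi⟩ := hbij.2 (Units.mk0 x hx)
    have hi' : ω ^ i.val = Units.mk0 x hx := hi
    exact ⟨i, by rw [← Units.val_pow_eq_pow_val, hi', Units.val_mk0]⟩
  -- support cardinality lemmas
  have hsupple : ∀ V : Set L,
      Nat.card ↥{i : ZMod (q ^ (2 * k) - 1) | (ω : L) ^ i.val ∈ V} ≤ Nat.card ↥V := by
    intro V
    have hinj : Function.Injective
        (fun i : ↥{i : ZMod (q ^ (2 * k) - 1) | (ω : L) ^ i.val ∈ V} =>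
          (⟨(ω : L) ^ i.1.val, i.2⟩ : ↥V)) := by
      intro a b hab
      simp only [Subtype.mk_eq_mk] at hab
      exact Subtype.ext (heinjL _ _ hab)
    exact Nat.card_le_card_of_injective _ hinj
  have hsuppcard : ∀ V : Set L, (0 : L) ∉ V →
      Nat.card ↥{i : ZMod (q ^ (2 * k) - 1) | (ω : L) ^ i.val ∈ V} = Nat.card ↥V := by
    intro V hV
    refine Nat.card_congr (Equiv.ofBijective
      (fun i : ↥{i : ZMod (q ^ (2 * k) - 1) | (ω : L) ^ i.val ∈ V} =>
        (⟨(ω : L) ^ i.1.val, i.2⟩ : ↥V)) ⟨?_, ?_⟩)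
    · intro a b hab
      simp only [Subtype.mk_eq_mk] at hab
      exact Subtype.ext (heinjL _ _ hab)
    · rintro ⟨x, hx⟩
      obtain ⟨i, hi⟩ := hesurjL x (by rintro rfl; exact hV hx)
      exact ⟨⟨i, by rw [Set.mem_setOf_eq, hi]; exact hx⟩, Subtype.ext hi⟩
  -- the shift identity
  have hshift : ∀ (V : Set L) (τ : ℕ),
      ((fun a => a + (τ : ZMod (q ^ (2 * k) - 1))) ''
          {i : ZMod (q ^ (2 * k) - 1) | (ω : L) ^ i.val ∈ V}) =
        {i : ZMod (q ^ (2 * k) - 1) | (ω : L) ^ i.val ∈ (fun x => (ω : L) ^ τ * x) '' V} := by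
    intro V τ
    ext i
    simp only [Set.mem_image, Set.mem_setOf_eq]
    constructor
    · rintro ⟨j, hj, rfl⟩
      exact ⟨(ω : L) ^ j.val, hj, (hemulL j τ).symm⟩
    · rintro ⟨v, hv, hveq⟩
      refine ⟨i - (τ : ZMod (q ^ (2 * k) - 1)), ?_, by ring⟩
      have h2 : (ω : L) ^ τ * (ω : L) ^ ((i - (τ : ZMod (q ^ (2 * k) - 1))).val) =
          (ω : L) ^ i.val := by
        rw [← hemulL (i - (τ : ZMod (q ^ (2 * k) - 1))) τ, sub_add_cancel]
      have hτ0 : (ω : L) ^ τ ≠ 0 := pow_ne_zero _ (Units.ne_zero ω)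
      have : v = (ω : L) ^ ((i - (τ : ZMod (q ^ (2 * k) - 1))).val) :=
        mul_left_cancel₀ hτ0 (by rw [hveq, h2])
      rwa [← this]
  -- basic facts about the translated sets
  have hV0 : ∀ (i : Fin r) (j : Fin t), (0 : L) ∉ (fun u => u + D i j) '' ((U i : Set L)) := by
    rintro i j ⟨u, hu, huj⟩
    apply hD0 i j
    have : D i j = -u := by linear_combination huj
    rw [this]
    exact neg_mem hu
  have hVcard : ∀ (i : Fin r) (j : Fin t),
      Nat.card ↥((fun u => u + D i j) '' ((U i : Set L))) = q ^ k := by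
    intro i j
    rw [Nat.card_congr (Equiv.Set.image _ _ (add_left_injective (D i j))).symm]
    exact submodule_card_eq q k hFq (U i) (hUk i)
  -- multiplication of a translated set by a nonzero scalar
  have hMul : ∀ (i' : Fin r) (h : Fin t) (α : L),
      (fun x => α * x) '' ((fun u => u + D i' h) '' (U i' : Set L)) =
        (fun u => u + α * D i' h) '' (((U i').map (LinearMap.mulLeft Fq α) : Set L)) := by
    intro i' h α
    rw [Submodule.map_coe, ← Set.image_comp, ← Set.image_comp]
    have : ((fun x => α * x) ∘ fun u => u + D i' h) =
        ((fun u => u + α * D i' h) ∘ fun x => (LinearMap.mulLeft Fq α) x) := by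
      funext u; simp [LinearMap.mulLeft_apply, mul_add]
    rw [this]
  -- the central cardinality estimate
  have hEst : ∀ (i i' : Fin r) (j h : Fin t) (α : L), α ≠ 0 →
      (i = i' → ∀ lam : Fq, α = algebraMap Fq L lam →
        D i j - algebraMap Fq L lam * D i' h ∉ U i) →
      Nat.card ↥(((fun u => u + D i j) '' (U i : Set L)) ∩
        ((fun x => α * x) '' ((fun u => u + D i' h) '' (U i' : Set L)))) ≤ q := by
    intro i i' j h α hα hsc
    rw [hMul i' h α]
    by_cases hii : i = i'
    · subst hii
      by_cases hsc' : ∃ lam : Fq, α = algebraMap Fq L lam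
      · obtain ⟨lam, rfl⟩ := hsc'
        have hempty : ((fun u => u + D i j) '' (U i : Set L)) ∩
            ((fun u => u + algebraMap Fq L lam * D i h) ''
              (((U i).map (LinearMap.mulLeft Fq (algebraMap Fq L lam)) : Set L))) = ∅ := by
          rw [Set.eq_empty_iff_forall_notMem]
          rintro x ⟨⟨u, hu, rfl⟩, ⟨w, hw, hwe⟩⟩
          obtain ⟨w', hw', rfl⟩ := Submodule.mem_map.mp hw
          refine hsc rfl lam rfl ?_
          have heq : D i j - algebraMap Fq L lam * D i h =
              (LinearMap.mulLeft Fq (algebraMap Fq L lam)) w' - u := by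
            simp only [LinearMap.mulLeft_apply] at hwe ⊢
            linear_combination -hwe
          rw [heq]
          refine sub_mem ?_ hu
          simp only [LinearMap.mulLeft_apply, ← Algebra.smul_def]
          exact Submodule.smul_mem _ lam hw'
        rw [hempty]
        simp
      · push_neg at hsc'
        refine le_trans (coset_inter_card_le _ _ _ _)
          (submodule_card_le q hq1 hFq _ (hauto i α ?_))
        rintro ⟨lam, hl⟩
        exact hsc' lam hl.symm
    · exact le_trans (coset_inter_card_le _ _ _ _)
        (submodule_card_le q hq1 hFq _ (hcross i i' hii α hα))
  -- reduce a shifted-intersection count to the set-level estimate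
  have hReduce : ∀ (V W : Set L) (τ : ℕ),
      Nat.card ↥({i : ZMod (q ^ (2 * k) - 1) | (ω : L) ^ i.val ∈ V} ∩
        ((fun a => a + (τ : ZMod (q ^ (2 * k) - 1))) ''
          {i : ZMod (q ^ (2 * k) - 1) | (ω : L) ^ i.val ∈ W})) ≤
      Nat.card ↥(V ∩ ((fun x => (ω : L) ^ τ * x) '' W)) := by
    intro V W τ
    rw [hshift W τ]
    have hset : ({i : ZMod (q ^ (2 * k) - 1) | (ω : L) ^ i.val ∈ V} ∩
        {i : ZMod (q ^ (2 * k) - 1) | (ω : L) ^ i.val ∈ (fun x => (ω : L) ^ τ * x) '' W}) =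
        {i : ZMod (q ^ (2 * k) - 1) |
          (ω : L) ^ i.val ∈ V ∩ ((fun x => (ω : L) ^ τ * x) '' W)} := rfl
    rw [hset]
    exact hsupple _
  -- injectivity of the support map on zero-free sets
  have hsuppinj : ∀ V W : Set L, (0 : L) ∉ V → (0 : L) ∉ W →
      {i : ZMod (q ^ (2 * k) - 1) | (ω : L) ^ i.val ∈ V} =
        {i : ZMod (q ^ (2 * k) - 1) | (ω : L) ^ i.val ∈ W} → V = W := by
    intro V W hV hW hVW
    ext x
    constructor
    · intro hx
      obtain ⟨i, hi⟩ := hesurjL x (by rintro rfl; exact hV hx)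
      have : i ∈ {i : ZMod (q ^ (2 * k) - 1) | (ω : L) ^ i.val ∈ V} := by
        rw [Set.mem_setOf_eq, hi]; exact hx
      rw [hVW] at this
      rwa [Set.mem_setOf_eq, hi] at this
    · intro hx
      obtain ⟨i, hi⟩ := hesurjL x (by rintro rfl; exact hW hx)
      have : i ∈ {i : ZMod (q ^ (2 * k) - 1) | (ω : L) ^ i.val ∈ W} := by
        rw [Set.mem_setOf_eq, hi]; exact hx
      rw [← hVW] at this
      rwa [Set.mem_setOf_eq, hi] at this
  -- equality of two translated sets forces equality of indices
  have hVinj : ∀ (i i' : Fin r) (j h : Fin t),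
      (fun u => u + D i j) '' ((U i : Set L)) = (fun u => u + D i' h) '' ((U i' : Set L)) →
      i = i' ∧ j = h := by
    have hsub : ∀ (i i' : Fin r) (j h : Fin t),
        (fun u => u + D i j) '' ((U i : Set L)) = (fun u => u + D i' h) '' ((U i' : Set L)) →
        D i j - D i' h ∈ U i' ∧ (U i : Set L) ⊆ (U i' : Set L) := by
      intro i i' j h hVW
      have hDmem : D i j - D i' h ∈ U i' := by
        have h1 : D i j ∈ (fun u => u + D i' h) '' ((U i' : Set L)) := by
          rw [← hVW]; exact ⟨0, Submodule.zero_mem _, by simp⟩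
        obtain ⟨w, hw, hwe⟩ := h1
        have : D i j - D i' h = w := by linear_combination -hwe
        rwa [this]
      refine ⟨hDmem, ?_⟩
      intro u hu
      have h2 : u + D i j ∈ (fun u => u + D i' h) '' ((U i' : Set L)) := by
        rw [← hVW]; exact ⟨u, hu, rfl⟩
      obtain ⟨w, hw, hwe⟩ := h2
      have : u = w - (D i j - D i' h) := by linear_combination -hwe
      rw [this]
      exact sub_mem hw hDmem
    intro i i' j h hVW
    obtain ⟨hD1, hle1⟩ := hsub i i' j h hVW
    obtain ⟨hD2, hle2⟩ := hsub i' i h j hVW.symm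
    have hUU : U i = U i' := by
      apply SetLike.coe_injective
      exact le_antisymm hle1 hle2
    have hii : i = i' := by
      by_contra hii
      refine horb i i' hii 1 one_ne_zero ?_
      rw [LinearMap.mulLeft_one, Submodule.map_id, hUU]
    subst hii
    refine ⟨rfl, ?_⟩
    by_contra hjh
    refine hDprop i j h hjh ⟨1, one_ne_zero, ?_⟩
    simpa using hD1
  -- the support map on pairs of indices
  have himage : ((fun V : Set L =>
        ({i : ZMod (q ^ (2 * k) - 1) | (ω : L) ^ i.val ∈ V} :
          Set (ZMod (q ^ (2 * k) - 1)))) ''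
        {V : Set L | ∃ i j, V = (fun u => u + D i j) '' ((U i : Set L))}) =
      Set.range (fun p : Fin r × Fin t =>
        ({i : ZMod (q ^ (2 * k) - 1) |
          (ω : L) ^ i.val ∈ (fun u => u + D p.1 p.2) '' ((U p.1 : Set L))} :
          Set (ZMod (q ^ (2 * k) - 1)))) := by
    ext X
    simp only [Set.mem_image, Set.mem_setOf_eq, Set.mem_range]
    constructor
    · rintro ⟨V, ⟨i, j, rfl⟩, rfl⟩
      exact ⟨(i, j), rfl⟩
    · rintro ⟨⟨i, j⟩, rfl⟩
      exact ⟨_, ⟨i, j, rfl⟩, rfl⟩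
  have hFinj : Function.Injective (fun p : Fin r × Fin t =>
      ({i : ZMod (q ^ (2 * k) - 1) |
        (ω : L) ^ i.val ∈ (fun u => u + D p.1 p.2) '' ((U p.1 : Set L))} :
        Set (ZMod (q ^ (2 * k) - 1)))) := by
    rintro ⟨i, j⟩ ⟨i', h⟩ hF
    have hVV := hsuppinj _ _ (hV0 i j) (hV0 i' h) hF
    obtain ⟨h1, h2⟩ := hVinj i i' j h hVV
    simp [Prod.ext_iff, h1, h2]
  constructor
  · refine ⟨?_, ?_, ?_⟩
    -- weights
    · rintro X ⟨V, ⟨i, j, rfl⟩, rfl⟩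
      rw [hsuppcard _ (hV0 i j)]
      exact hVcard i j
    -- autocorrelation
    · rintro X ⟨V, ⟨i, j, rfl⟩, rfl⟩ τ hτ0 hτn
      refine le_trans (hReduce _ _ τ) (hEst i i j j ((ω : L) ^ τ)
        (pow_ne_zero _ (Units.ne_zero ω)) ?_)
      intro _ lam hαl hmem
      have hα1 : (ω : L) ^ τ ≠ 1 := by
        intro h1
        have : ω ^ τ = 1 := Units.ext (by simpa using h1)
        have hdvd : orderOf ω ∣ τ := orderOf_dvd_of_pow_eq_one this
        rw [hord] at hdvd
        exact absurd (Nat.le_of_dvd hτ0 hdvd) (not_le.mpr hτn)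
      have hlam0 : lam ≠ 0 := by
        rintro rfl
        apply pow_ne_zero τ (Units.ne_zero ω)
        simpa using hαl
      have hlam1 : lam ≠ 1 := by
        rintro rfl
        exact hα1 (by simpa using hαl)
      apply hD0 i j
      have heq : D i j - algebraMap Fq L lam * D i j = (1 - lam) • D i j := by
        rw [sub_smul, one_smul, Algebra.smul_def]
      rw [heq] at hmem
      have h1lam : (1 : Fq) - lam ≠ 0 := sub_ne_zero.mpr (Ne.symm hlam1)
      have := Submodule.smul_mem (U i) ((1 - lam)⁻¹) hmem
      rwa [smul_smul, inv_mul_cancel₀ h1lam, one_smul] at this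
    -- cross-correlation
    · rintro X ⟨V, ⟨i, j, rfl⟩, rfl⟩ Y ⟨V', ⟨i', h, rfl⟩, rfl⟩ hXY τ
      refine le_trans (hReduce _ _ τ) (hEst i i' j h ((ω : L) ^ τ)
        (pow_ne_zero _ (Units.ne_zero ω)) ?_)
      intro hii lam hαl
      subst hii
      have hlam0 : lam ≠ 0 := by
        rintro rfl
        apply pow_ne_zero τ (Units.ne_zero ω)
        simpa using hαl
      by_cases hjh : j = h
      · subst hjh
        exact absurd rfl hXY
      · intro hmem
        exact hDprop i j h hjh ⟨lam, hlam0, hmem⟩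
  -- the size of the code
  · rw [himage]
    rw [Nat.card_range_of_injective hFinj]
    rw [← ht]
    simp [Nat.card_eq_fintype_card]
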